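/- Let π_t : [θ̲, θ̄] → (0,1) be differentiable and increasing, and define π_d by π_d'(θ) = c·π_t'(θ) for a constant c ∈ [0,1) with π_d(θ̲) = π_t(θ̲). Then t is more accurate than d. -/
import Mathlib

open Set

/-- If `πt` is differentiable and increasing with values in `(0,1)`, and `πd` has derivative
`c·πt'` for a constant `c ∈ [0,1)` with `πd(θ̲) = πt(θ̲)`, then `t` is more accurate than `d`. -/
theorem stmt_6 (lo hi : ℝ) (hlohi : lo < hi) (πt πd πt' : ℝ → ℝ) (c : ℝ)
    (hc : c ∈ Ico (0:ℝ) 1)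
    (hdt : ∀ θ ∈ Icc lo hi, HasDerivAt πt (πt' θ) θ)
    (hdd : ∀ θ ∈ Icc lo hi, HasDerivAt πd (c * πt' θ) θ)
    (hrt : ∀ θ ∈ Icc lo hi, πt θ ∈ Ioo (0:ℝ) 1)
    (hmono : ∀ θ ∈ Icc lo hi, ∀ θ' ∈ Icc lo hi, θ ≤ θ' → πt θ ≤ πt θ')
    (hinit : πd lo = πt lo) :
    ∀ θ ∈ Icc lo hi, ∀ θ' ∈ Icc lo hi, θ' < θ →
      πt θ * πd θ' ≥ πd θ * πt θ' ∧
      (1 - πt θ) * (1 - πd θ') ≤ (1 - πd θ) * (1 - πt θ') := by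
  have hkey : ∀ θ ∈ Icc lo hi, πd θ = c * πt θ + (1 - c) * πt lo := by
    have := eq_of_has_deriv_right_eq (a := lo) (b := hi) (f := πd)
      (g := fun θ => c * πt θ + (1 - c) * πt lo) (f' := fun θ => c * πt' θ)
      (fun x hx => ((hdd x (mem_Icc_of_Ico hx)).hasDerivWithinAt))
      (fun x hx => by
        have := ((hdt x (mem_Icc_of_Ico hx)).const_mul c).add_const ((1 - c) * πt lo)
        exact this.hasDerivWithinAt)
      (fun x hx => (hdd x hx).continuousAt.continuousWithinAt)
      (fun x hx => by
        exact (((hdt x hx).continuousAt.const_smul c).add (continuousAt_const (y := (1 - c) * πt lo))).continuousWithinAt)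
      (by rw [hinit]; ring)
    exact this
  intro θ hθ θ' hθ' hlt
  have hlo : lo ∈ Icc lo hi := ⟨le_refl _, hlohi.le⟩
  have ha := hrt lo hlo
  have hx := hrt θ hθ
  have hx' := hrt θ' hθ'
  have h1 : πt lo ≤ πt θ' := hmono lo hlo θ' hθ' hθ'.1
  have h2 : πt θ' ≤ πt θ := hmono θ' hθ' θ hθ hlt.le
  rw [hkey θ hθ, hkey θ' hθ']
  obtain ⟨hc0, hc1⟩ := hc
  constructor
  · nlinarith [mul_nonneg (mul_nonneg (by linarith : (0:ℝ) ≤ 1 - c) ha.1.le) (sub_nonneg.2 h2)]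
  · nlinarith [mul_nonneg (mul_nonneg (by linarith : (0:ℝ) ≤ 1 - c) (by linarith [ha.2] : (0:ℝ) ≤ 1 - πt lo)) (sub_nonneg.2 h2)]
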